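/- Let A be the associative ℚ(q)-algebra generated by elements x_{ij} for 1 ≤ i ≤ m, 1 ≤ j ≤ n, subject to the relations: x_{ij} x_{kl} = −q x_{kl} x_{ij} whenever (i = k and j < l) or (i < k and j = l); x_{ij} x_{kl} = −x_{kl} x_{ij} whenever i > k and j < l; x_{ij} x_{kl} = −x_{kl} x_{ij} + (q − q^{-1}) x_{il} x_{kj} whenever i < k and j < l; and x_{ij}² = 0 for all i, j. For a subset S ⊂ {1,...,m}×{1,...,n}, order its elements (i_1,j_1), ..., (i_r,j_r) so that j_1 ≤ ... ≤ j_r and i_p > i_{p+1} whenever j_p = j_{p+1}, and set x_S = x_{i_1 j_1} ⋯ x_{i_r j_r} (with x_∅ = 1). Then the set {x_S : S ⊂ {1,...,m}×{1,...,n}} spans A as a ℚ(q)-vector space. -/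

import Mathlib

noncomputable section

/-- The base field `ℚ(q)`. -/
abbrev KK : Type := RatFunc ℚ

/-- The indeterminate `q`. -/
noncomputable def qq : KK := RatFunc.X

/-- The generator `x_{ij}` of the free algebra. -/
def XX (m n : ℕ) (p : Fin m × Fin n) : FreeAlgebra KK (Fin m × Fin n) :=
  FreeAlgebra.ι KK p

/-- The defining relations of the q-deformed exterior algebra. -/
inductive XRel (m n : ℕ) :
    FreeAlgebra KK (Fin m × Fin n) → FreeAlgebra KK (Fin m × Fin n) → Prop
  | qrow (i : Fin m) (j l : Fin n) (h : j < l) :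
      XRel m n (XX m n (i, j) * XX m n (i, l)) (-(qq • (XX m n (i, l) * XX m n (i, j))))
  | qcol (i k : Fin m) (j : Fin n) (h : i < k) :
      XRel m n (XX m n (i, j) * XX m n (k, j)) (-(qq • (XX m n (k, j) * XX m n (i, j))))
  | anti (i k : Fin m) (j l : Fin n) (h1 : k < i) (h2 : j < l) :
      XRel m n (XX m n (i, j) * XX m n (k, l)) (-(XX m n (k, l) * XX m n (i, j)))
  | qser (i k : Fin m) (j l : Fin n) (h1 : i < k) (h2 : j < l) :
      XRel m n (XX m n (i, j) * XX m n (k, l))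
        (-(XX m n (k, l) * XX m n (i, j)) + (qq - qq⁻¹) • (XX m n (i, l) * XX m n (k, j)))
  | sq (i : Fin m) (j : Fin n) : XRel m n (XX m n (i, j) * XX m n (i, j)) 0

/-- The q-deformed exterior algebra `A = Λ_q((ℂ^m)^* ⊗ ℂ^n)`. -/
abbrev Aalg (m n : ℕ) := RingQuot (XRel m n)

/-- The generator `x_{ij}` in `A`. -/
def xgen (m n : ℕ) (p : Fin m × Fin n) : Aalg m n :=
  RingQuot.mkAlgHom KK (XRel m n) (XX m n p)

/-- All pairs `(i,j)`, ordered by `j` ascending and then `i` descending. -/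
def orderedList (m n : ℕ) : List (Fin m × Fin n) :=
  (List.finRange n).flatMap fun j => (List.finRange m).reverse.map fun i => (i, j)

/-- The ordered monomial `x_S` attached to a subset `S`. -/
def xS (m n : ℕ) (S : Finset (Fin m × Fin n)) : Aalg m n :=
  (((orderedList m n).filter fun p => decide (p ∈ S)).map (xgen m n)).prod

namespace Stmt3Aux

lemma blk_lt {m j1 j2 r1 : ℕ} (h1 : r1 < m) (hj : j1 < j2) : j1 * m + r1 < j2 * m :=
  calc j1 * m + r1 < j1 * m + m := by omega
    _ = (j1 + 1) * m := by ring
    _ ≤ j2 * m := Nat.mul_le_mul_right m hj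

lemma rank_decomp {m j1 j2 r1 r2 : ℕ} (h1 : r1 < m) (h2 : r2 < m)
    (h : j1 * m + r1 = j2 * m + r2) : j1 = j2 ∧ r1 = r2 := by
  rcases Nat.lt_trichotomy j1 j2 with hl | he | hg
  · exact absurd (blk_lt h1 hl) (by omega)
  · constructor
    · exact he
    · subst he; omega
  · exact absurd (blk_lt h2 hg) (by omega)

variable (m n : ℕ)

def ordv (p : Fin m × Fin n) : ℕ := p.2.val * m + (m - 1 - p.1.val)

lemma rest_lt (p : Fin m × Fin n) : m - 1 - (p.1 : ℕ) < m := by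
  have := p.1.isLt; omega

lemma ordv_lt (p : Fin m × Fin n) : ordv m n p < m * n := by
  have h2 : (p.2 : ℕ) < n := p.2.isLt
  have h3 := rest_lt m n p
  have he : (p.2.val + 1) * m = p.2.val * m + m := by ring
  calc ordv m n p < (p.2.val + 1) * m := by unfold ordv; omega
    _ ≤ n * m := Nat.mul_le_mul_right m h2
    _ = m * n := Nat.mul_comm n m

lemma ordv_inj {a b : Fin m × Fin n} (h : ordv m n a = ordv m n b) : a = b := by
  obtain ⟨hc, hr⟩ := rank_decomp (rest_lt m n a) (rest_lt m n b) h
  have h1a := a.1.isLt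
  have h1b := b.1.isLt
  exact Prod.ext (Fin.ext (by omega)) (Fin.ext hc)

lemma ordv_lt_of_col_lt {a b : Fin m × Fin n} (h : (a.2 : ℕ) < (b.2 : ℕ)) :
    ordv m n a < ordv m n b := by
  have := blk_lt (rest_lt m n a) h
  unfold ordv; omega

lemma col_le_of_ordv_le {a b : Fin m × Fin n} (h : ordv m n a ≤ ordv m n b) :
    (a.2 : ℕ) ≤ (b.2 : ℕ) := by
  by_contra hcon
  push_neg at hcon
  have := ordv_lt_of_col_lt m n (a := b) (b := a) hcon
  omega

lemma ordv_lt_of_col_eq {a b : Fin m × Fin n} (hc : (a.2 : ℕ) = (b.2 : ℕ))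
    (h : (b.1 : ℕ) < (a.1 : ℕ)) : ordv m n a < ordv m n b := by
  have h1a := a.1.isLt
  have h1b := b.1.isLt
  unfold ordv; rw [hc]; omega

lemma row_lt_of_ordv_lt_col_eq {a b : Fin m × Fin n} (hc : (a.2 : ℕ) = (b.2 : ℕ))
    (h : ordv m n a < ordv m n b) : (b.1 : ℕ) < (a.1 : ℕ) := by
  have h1a := a.1.isLt
  have h1b := b.1.isLt
  unfold ordv at h; rw [hc] at h; omega

end Stmt3Aux

namespace Stmt3Aux

variable (m n : ℕ)

lemma sorted_orderedList :
    (orderedList m n).Pairwise (fun a b => ordv m n a < ordv m n b) := by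
  rw [orderedList, List.pairwise_flatMap]
  constructor
  · intro j _
    rw [List.pairwise_map, List.pairwise_reverse]
    refine (List.pairwise_lt_finRange m).imp ?_
    intro a b hab
    exact ordv_lt_of_col_eq m n rfl hab
  · refine (List.pairwise_lt_finRange n).imp ?_
    intro j1 j2 hj x hx y hy
    simp only [List.mem_map] at hx hy
    obtain ⟨i1, -, rfl⟩ := hx
    obtain ⟨i2, -, rfl⟩ := hy
    exact ordv_lt_of_col_lt m n hj

lemma mem_orderedList (p : Fin m × Fin n) : p ∈ orderedList m n := by
  rw [orderedList, List.mem_flatMap]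
  exact ⟨p.2, List.mem_finRange _, by simp [List.mem_map]⟩

lemma nodup_orderedList : (orderedList m n).Nodup :=
  (sorted_orderedList m n).imp (fun h he => by subst he; exact lt_irrefl _ h)

/-- weight used to handle the extra term of the q-Serre style relation. -/
def wt (p : Fin m × Fin n) : ℕ := p.1.val * p.2.val

def Wt (l : List (Fin m × Fin n)) : ℕ := (l.map (wt m n)).sum

/-- position-weighted sum used to handle plain swaps. -/
def Pm : List (Fin m × Fin n) → ℕ
  | [] => 0
  | a :: t => (t.length + 1) * ordv m n a + Pm t

lemma Wt_append (u v : List (Fin m × Fin n)) : Wt m n (u ++ v) = Wt m n u + Wt m n v := by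
  simp [Wt]

lemma Wt_cons (a : Fin m × Fin n) (t : List (Fin m × Fin n)) :
    Wt m n (a :: t) = wt m n a + Wt m n t := by simp [Wt]

lemma Pm_cons (a : Fin m × Fin n) (t : List (Fin m × Fin n)) :
    Pm m n (a :: t) = (t.length + 1) * ordv m n a + Pm m n t := rfl

lemma Pm_append_congr {s t : List (Fin m × Fin n)} (hlen : s.length = t.length)
    (u : List (Fin m × Fin n)) : Pm m n (u ++ s) + Pm m n t = Pm m n (u ++ t) + Pm m n s := by
  induction u with
  | nil => simp [Nat.add_comm]
  | cons c u ih =>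
      rw [List.cons_append, List.cons_append, Pm_cons, Pm_cons,
        List.length_append, List.length_append, hlen]
      omega

lemma Pm_bound (l : List (Fin m × Fin n)) : Pm m n l ≤ l.length * l.length * (m * n) := by
  induction l with
  | nil => simp [Pm]
  | cons a t ih =>
      have h1 : ordv m n a ≤ m * n := le_of_lt (ordv_lt m n a)
      have h2 : (t.length + 1) * ordv m n a ≤ (t.length + 1) * (m * n) :=
        Nat.mul_le_mul_left _ h1
      rw [Pm_cons]
      simp only [List.length_cons]
      nlinarith

/-- the global measure for the straightening induction. -/
def μ (l : List (Fin m × Fin n)) : ℕ :=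
  Wt m n l * (l.length * l.length * (m * n) + 1) + Pm m n l

lemma mu_swap {a b : Fin m × Fin n} (h : ordv m n b < ordv m n a)
    (u v : List (Fin m × Fin n)) :
    μ m n (u ++ b :: a :: v) < μ m n (u ++ a :: b :: v) := by
  have hlen : (u ++ b :: a :: v).length = (u ++ a :: b :: v).length := by simp
  have hW : Wt m n (u ++ b :: a :: v) = Wt m n (u ++ a :: b :: v) := by
    simp only [Wt_append, Wt_cons]; omega
  have hP : Pm m n (u ++ b :: a :: v) < Pm m n (u ++ a :: b :: v) := by
    have hcong := Pm_append_congr m n (s := b :: a :: v) (t := a :: b :: v) (by simp) u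
    have : Pm m n (b :: a :: v) < Pm m n (a :: b :: v) := by
      rw [Pm_cons, Pm_cons, Pm_cons, Pm_cons]
      simp only [List.length_cons]
      nlinarith
    omega
  rw [μ, μ, hW, hlen]
  exact Nat.add_lt_add_left hP _

lemma mu_extra {a b a' b' : Fin m × Fin n}
    (h : wt m n a' + wt m n b' < wt m n a + wt m n b) (u v : List (Fin m × Fin n)) :
    μ m n (u ++ a' :: b' :: v) < μ m n (u ++ a :: b :: v) := by
  have hlen : (u ++ a' :: b' :: v).length = (u ++ a :: b :: v).length := by simp
  have hW : Wt m n (u ++ a' :: b' :: v) < Wt m n (u ++ a :: b :: v) := by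
    simp only [Wt_append, Wt_cons]; omega
  rw [μ, μ, hlen]
  set L := (u ++ a :: b :: v).length with hL
  have hPbound : Pm m n (u ++ a' :: b' :: v) ≤ L * L * (m * n) := by
    have := Pm_bound m n (u ++ a' :: b' :: v)
    rwa [hlen] at this
  set B := L * L * (m * n) + 1 with hB
  have hBpos : 0 < B := by positivity
  calc Wt m n (u ++ a' :: b' :: v) * B + Pm m n (u ++ a' :: b' :: v)
      ≤ Wt m n (u ++ a' :: b' :: v) * B + (B - 1) := by omega
    _ < (Wt m n (u ++ a' :: b' :: v) + 1) * B := by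
        have : (Wt m n (u ++ a' :: b' :: v) + 1) * B
            = Wt m n (u ++ a' :: b' :: v) * B + B := by ring
        omega
    _ ≤ Wt m n (u ++ a :: b :: v) * B := Nat.mul_le_mul_right B hW
    _ ≤ Wt m n (u ++ a :: b :: v) * B + Pm m n (u ++ a :: b :: v) := Nat.le_add_right _ _

end Stmt3Aux

namespace Stmt3Aux

variable (m n : ℕ)

lemma qq_ne_zero : qq ≠ 0 := RatFunc.X_ne_zero

def prodWord (l : List (Fin m × Fin n)) : Aalg m n := (l.map (xgen m n)).prod

lemma prodWord_nil : prodWord m n [] = 1 := rfl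

lemma prodWord_cons (a : Fin m × Fin n) (t : List (Fin m × Fin n)) :
    prodWord m n (a :: t) = xgen m n a * prodWord m n t := by
  simp [prodWord]

lemma prodWord_append (u v : List (Fin m × Fin n)) :
    prodWord m n (u ++ v) = prodWord m n u * prodWord m n v := by
  simp [prodWord]

lemma rel_eq {x y : FreeAlgebra KK (Fin m × Fin n)} (h : XRel m n x y) :
    RingQuot.mkAlgHom KK (XRel m n) x = RingQuot.mkAlgHom KK (XRel m n) y :=
  RingQuot.mkAlgHom_rel _ h

lemma xrel_qrow (i : Fin m) {j l : Fin n} (h : j < l) :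
    xgen m n (i, j) * xgen m n (i, l) = -(qq • (xgen m n (i, l) * xgen m n (i, j))) := by
  have := rel_eq m n (XRel.qrow i j l h)
  simpa only [map_mul, map_neg, map_smul, xgen] using this

lemma xrel_qcol {i k : Fin m} (j : Fin n) (h : i < k) :
    xgen m n (i, j) * xgen m n (k, j) = -(qq • (xgen m n (k, j) * xgen m n (i, j))) := by
  have := rel_eq m n (XRel.qcol i k j h)
  simpa only [map_mul, map_neg, map_smul, xgen] using this

lemma xrel_anti {i k : Fin m} {j l : Fin n} (h1 : k < i) (h2 : j < l) :
    xgen m n (i, j) * xgen m n (k, l) = -(xgen m n (k, l) * xgen m n (i, j)) := by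
  have := rel_eq m n (XRel.anti i k j l h1 h2)
  simpa only [map_mul, map_neg, xgen] using this

lemma xrel_qser {i k : Fin m} {j l : Fin n} (h1 : i < k) (h2 : j < l) :
    xgen m n (i, j) * xgen m n (k, l) =
      -(xgen m n (k, l) * xgen m n (i, j)) +
        (qq - qq⁻¹) • (xgen m n (i, l) * xgen m n (k, j)) := by
  have := rel_eq m n (XRel.qser i k j l h1 h2)
  simpa only [map_mul, map_neg, map_add, map_smul, xgen] using this

lemma xrel_sq (i : Fin m) (j : Fin n) : xgen m n (i, j) * xgen m n (i, j) = 0 := by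
  have := rel_eq m n (XRel.sq i j)
  simpa only [map_mul, map_zero, xgen] using this

/-- solve `Y = -(q • X)` for `X`. -/
lemma solve_q {X Y : Aalg m n} (h : Y = -(qq • X)) : X = -(qq⁻¹ • Y) := by
  rw [h, smul_neg, smul_smul, inv_mul_cancel₀ (qq_ne_zero), one_smul, neg_neg]


/-- Instance-aligned versions of basic ring identities in `Aalg`, for use with `rw`/`simp`
(the generic lemmas do not match `RingQuot`'s primitive instances syntactically). -/
lemma A_neg_mul (x y : Aalg m n) : -x * y = -(x * y) := neg_mul x y
lemma A_mul_neg (x y : Aalg m n) : x * -y = -(x * y) := mul_neg x y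
lemma A_mul_assoc (x y z : Aalg m n) : x * y * z = x * (y * z) := mul_assoc x y z
lemma A_smul_mul (c : KK) (x y : Aalg m n) : (c • x) * y = c • (x * y) := smul_mul_assoc c x y
lemma A_mul_smul (c : KK) (x y : Aalg m n) : x * (c • y) = c • (x * y) := mul_smul_comm c x y
lemma A_mul_add (x y z : Aalg m n) : x * (y + z) = x * y + x * z := mul_add x y z
lemma A_add_mul (x y z : Aalg m n) : (x + y) * z = x * z + y * z := add_mul x y z

lemma step_swap_smul {a b : Fin m × Fin n} {c : KK}
    (h : xgen m n a * xgen m n b = -(c • (xgen m n b * xgen m n a)))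
    (u v : List (Fin m × Fin n)) :
    prodWord m n (u ++ a :: b :: v) = -(c • prodWord m n (u ++ b :: a :: v)) := by
  rw [prodWord_append, prodWord_append, prodWord_cons, prodWord_cons, prodWord_cons,
    prodWord_cons, ← mul_assoc, ← mul_assoc, mul_assoc (prodWord m n u), h]
  simp only [A_mul_neg, A_neg_mul, A_mul_smul, A_smul_mul, A_mul_assoc]

lemma step_swap_neg {a b : Fin m × Fin n}
    (h : xgen m n a * xgen m n b = -(xgen m n b * xgen m n a))
    (u v : List (Fin m × Fin n)) :
    prodWord m n (u ++ a :: b :: v) = -(prodWord m n (u ++ b :: a :: v)) := by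
  rw [prodWord_append, prodWord_append, prodWord_cons, prodWord_cons, prodWord_cons,
    prodWord_cons, ← mul_assoc, ← mul_assoc, mul_assoc (prodWord m n u), h]
  simp only [A_mul_neg, A_neg_mul, A_mul_assoc]

lemma step_extra_neg {a b a' b' : Fin m × Fin n} {d : KK}
    (h : xgen m n a * xgen m n b
        = -(xgen m n b * xgen m n a) + d • (xgen m n a' * xgen m n b'))
    (u v : List (Fin m × Fin n)) :
    prodWord m n (u ++ a :: b :: v)
      = -(prodWord m n (u ++ b :: a :: v)) + d • prodWord m n (u ++ a' :: b' :: v) := by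
  rw [prodWord_append, prodWord_append, prodWord_append, prodWord_cons, prodWord_cons,
    prodWord_cons, prodWord_cons, prodWord_cons, prodWord_cons,
    ← mul_assoc, ← mul_assoc, mul_assoc (prodWord m n u), h]
  simp only [A_mul_add, A_add_mul, A_mul_neg, A_neg_mul, A_mul_smul, A_smul_mul, A_mul_assoc]

lemma xrel_sq' (p : Fin m × Fin n) : xgen m n p * xgen m n p = 0 := by
  obtain ⟨i, j⟩ := p; exact xrel_sq m n i j

lemma step_zero {a : Fin m × Fin n} (u v : List (Fin m × Fin n)) :
    prodWord m n (u ++ a :: a :: v) = 0 := by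
  rw [prodWord_append, prodWord_cons, prodWord_cons, ← mul_assoc (xgen m n a) (xgen m n a) (prodWord m n v),
    xrel_sq' m n a, zero_mul, mul_zero]

lemma exists_break {α : Type*} (R : α → α → Prop) :
    ∀ l : List α, ¬ List.Chain' R l →
      ∃ u a b v, l = u ++ a :: b :: v ∧ ¬ R a b := by
  intro l
  induction l with
  | nil => intro h; exact absurd List.isChain_nil h
  | cons x t ih =>
      cases t with
      | nil => intro h; exact absurd (List.isChain_singleton x) h
      | cons y s =>
          intro h
          rw [show List.Chain' R (x :: y :: s) ↔ R x y ∧ List.Chain' R (y :: s) from List.isChain_cons_cons] at h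
          by_cases hxy : R x y
          · have hs : ¬ List.Chain' R (y :: s) := fun hc => h ⟨hxy, hc⟩
            obtain ⟨u, a, b, v, heq, hr⟩ := ih hs
            exact ⟨x :: u, a, b, v, by rw [heq]; rfl, hr⟩
          · exact ⟨[], x, y, s, rfl, hxy⟩

end Stmt3Aux

namespace Stmt3Aux

variable (m n : ℕ)

lemma chain_filter {l : List (Fin m × Fin n)}
    (hl : List.Chain' (fun a b => ordv m n a < ordv m n b) l) :
    (orderedList m n).filter (fun p => decide (p ∈ l)) = l := by
  haveI : IsTrans (Fin m × Fin n) (fun a b => ordv m n a < ordv m n b) :=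
    ⟨fun a b c h1 h2 => lt_trans h1 h2⟩
  haveI : IsAntisymm (Fin m × Fin n) (fun a b => ordv m n a < ordv m n b) :=
    ⟨fun a b h1 h2 => absurd h2 (lt_asymm h1)⟩
  have hp : l.Pairwise (fun a b => ordv m n a < ordv m n b) :=
    List.isChain_iff_pairwise.mp hl
  have hnl : l.Nodup := hp.imp (fun h he => by subst he; exact lt_irrefl _ h)
  have hnf : ((orderedList m n).filter (fun p => decide (p ∈ l))).Nodup :=
    (nodup_orderedList m n).filter _
  have hpf : ((orderedList m n).filter (fun p => decide (p ∈ l))).Pairwise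
      (fun a b => ordv m n a < ordv m n b) :=
    List.Pairwise.sublist List.filter_sublist (sorted_orderedList m n)
  have hperm : List.Perm ((orderedList m n).filter (fun p => decide (p ∈ l))) l := by
    refine (List.perm_ext_iff_of_nodup hnf hnl).mpr ?_
    intro x
    simp [List.mem_filter, mem_orderedList]
  exact List.Perm.eq_of_pairwise' hpf hp hperm

set_option maxHeartbeats 1000000 in
lemma prodWord_mem :
    ∀ (N : ℕ) (l : List (Fin m × Fin n)), μ m n l = N →
      prodWord m n l ∈ Submodule.span KK (Set.range (xS m n)) := by
  intro N
  induction N using Nat.strong_induction_on with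
  | _ N IH =>
    intro l hN
    subst hN
    by_cases hc : List.Chain' (fun a b => ordv m n a < ordv m n b) l
    · apply Submodule.subset_span
      refine ⟨l.toFinset, ?_⟩
      rw [xS]
      have he : (orderedList m n).filter (fun p => decide (p ∈ l.toFinset)) = l := by
        have hfn : (fun p : Fin m × Fin n => decide (p ∈ l.toFinset))
            = (fun p => decide (p ∈ l)) := by
          funext p; simp [List.mem_toFinset]
        rw [hfn]
        exact chain_filter m n hc
      rw [he]
      rfl
    · obtain ⟨u, a, b, v, rfl, hab⟩ :=
        exists_break (fun a b => ordv m n a < ordv m n b) l hc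
      by_cases heq : a = b
      · subst heq
        rw [step_zero]
        exact Submodule.zero_mem _
      · have hle : ordv m n b ≤ ordv m n a := Nat.le_of_not_lt hab
        have hlt : ordv m n b < ordv m n a :=
          lt_of_le_of_ne hle (fun he => heq (ordv_inj m n he.symm))
        obtain ⟨ai, aj⟩ := a
        obtain ⟨bi, bj⟩ := b
        have hcol : (bj : ℕ) ≤ (aj : ℕ) :=
          col_le_of_ordv_le m n (a := (bi, bj)) (b := (ai, aj)) hle
        rcases eq_or_lt_of_le hcol with hce | hclt
        · -- same column
          have hj : bj = aj := Fin.ext hce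
          subst hj
          have hrow : (ai : ℕ) < (bi : ℕ) :=
            row_lt_of_ordv_lt_col_eq m n (a := (bi, bj)) (b := (ai, bj)) rfl hlt
          have hrel := xrel_qcol m n (i := ai) (k := bi) bj (Fin.lt_def.mpr hrow)
          rw [step_swap_smul m n hrel u v]
          exact Submodule.neg_mem _
            (Submodule.smul_mem _ _ (IH _ (mu_swap m n hlt u v) _ rfl))
        · -- bj < aj
          rcases lt_trichotomy (ai : ℕ) (bi : ℕ) with hio | hie | hoi
          · -- ai < bi : pure sign
            have hba := xrel_anti m n (i := bi) (k := ai) (j := bj) (l := aj)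
              (Fin.lt_def.mpr hio) (Fin.lt_def.mpr hclt)
            have h2 : xgen m n (ai, aj) * xgen m n (bi, bj)
                = -(xgen m n (bi, bj) * xgen m n (ai, aj)) := by
              rw [hba, neg_neg]
            rw [step_swap_neg m n h2 u v]
            exact Submodule.neg_mem _ (IH _ (mu_swap m n hlt u v) _ rfl)
          · -- same row
            have hi : ai = bi := Fin.ext hie
            subst hi
            have hrel := xrel_qrow m n ai (j := bj) (l := aj) (Fin.lt_def.mpr hclt)
            have h2 : xgen m n (ai, aj) * xgen m n (ai, bj)
                = -(qq⁻¹ • (xgen m n (ai, bj) * xgen m n (ai, aj))) :=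
              solve_q m n hrel
            rw [step_swap_smul m n h2 u v]
            exact Submodule.neg_mem _
              (Submodule.smul_mem _ _ (IH _ (mu_swap m n hlt u v) _ rfl))
          · -- bi < ai : extra term
            have hser := xrel_qser m n (i := bi) (k := ai) (j := bj) (l := aj)
              (Fin.lt_def.mpr hoi) (Fin.lt_def.mpr hclt)
            have h2 : xgen m n (ai, aj) * xgen m n (bi, bj)
                = -(xgen m n (bi, bj) * xgen m n (ai, aj))
                  + (qq - qq⁻¹) • (xgen m n (bi, aj) * xgen m n (ai, bj)) := by
              rw [hser, neg_add, neg_neg]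
              abel
            rw [step_extra_neg m n h2 u v]
            have hwt : wt m n (bi, aj) + wt m n (ai, bj)
                < wt m n (ai, aj) + wt m n (bi, bj) := by
              simp only [wt]
              obtain ⟨d, hd⟩ : ∃ d, (aj : ℕ) = (bj : ℕ) + (d + 1) :=
                ⟨(aj : ℕ) - (bj : ℕ) - 1, by omega⟩
              rw [hd]
              have hmul : (bi : ℕ) * (d + 1) < (ai : ℕ) * (d + 1) :=
                mul_lt_mul_of_pos_right hoi (by omega)
              nlinarith
            refine Submodule.add_mem _ ?_ ?_
            · exact Submodule.neg_mem _ (IH _ (mu_swap m n hlt u v) _ rfl)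
            · exact Submodule.smul_mem _ _ (IH _ (mu_extra m n hwt u v) _ rfl)

end Stmt3Aux

namespace Stmt3Aux

variable (m n : ℕ)

lemma prodWord_singleton (p : Fin m × Fin n) : prodWord m n [p] = xgen m n p := by
  simp [prodWord]

lemma adjoin_xgen_top :
    Algebra.adjoin KK (Set.range (xgen m n)) = (⊤ : Subalgebra KK (Aalg m n)) := by
  have hr : Set.range (xgen m n)
      = (RingQuot.mkAlgHom KK (XRel m n)) '' (Set.range (XX m n)) := by
    rw [← Set.range_comp]; rfl
  have hXX : Set.range (XX m n) = Set.range (FreeAlgebra.ι KK (X := Fin m × Fin n)) := rfl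
  rw [hr, ← AlgHom.map_adjoin, hXX, FreeAlgebra.adjoin_range_ι, Algebra.map_top]
  exact (AlgHom.range_eq_top _).mpr (RingQuot.mkAlgHom_surjective KK (XRel m n))

lemma span_top : Submodule.span KK (Set.range (xS m n)) = (⊤ : Submodule KK (Aalg m n)) := by
  apply le_antisymm le_top
  have h1 : (⊤ : Submodule KK (Aalg m n))
      = Submodule.span KK (Submonoid.closure (Set.range (xgen m n)) : Set (Aalg m n)) := by
    rw [← Algebra.adjoin_eq_span, adjoin_xgen_top]
    rfl
  rw [h1]
  apply Submodule.span_le.mpr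
  intro x hx
  have hword : ∃ l : List (Fin m × Fin n), x = prodWord m n l := by
    induction hx using Submonoid.closure_induction with
    | mem y hy =>
        obtain ⟨p, rfl⟩ := hy
        exact ⟨[p], (prodWord_singleton m n p).symm⟩
    | one => exact ⟨[], rfl⟩
    | mul y z _ _ hy hz =>
        obtain ⟨ly, rfl⟩ := hy
        obtain ⟨lz, rfl⟩ := hz
        exact ⟨ly ++ lz, (prodWord_append m n ly lz).symm⟩
  obtain ⟨l, rfl⟩ := hword
  exact prodWord_mem m n (μ m n l) l rfl

end Stmt3Aux


/-- the ordered monomials `x_S`, `S ⊆ {1,…,m} × {1,…,n}`, span the q-deformed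
exterior algebra `A` over `ℚ(q)`. -/
theorem stmt3 (m n : ℕ) (hm : 0 < m) (hn : 0 < n) :
    Submodule.span KK (Set.range (xS m n)) = (⊤ : Submodule KK (Aalg m n)) := by
  exact Stmt3Aux.span_top m n

end
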